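/- Fix 1 ≤ ξ < ω₁ and let (x_i) be a normalized block sequence in 𝔛_{0,1}^{ω^ξ} with α_{<ω^ξ}((x_i)) > 0. Then there is a subsequence of (x_i) which is an ℓ_1^{ω^ξ} spreading model, i.e. there exist an infinite M ⊆ ℕ and ε > 0 such that for every G ∈ 𝓢_{ω^ξ} and all scalars (λ_i)_{i∈G}, ‖Σ_{i∈G} λ_i x_{m_i}‖ ≥ ε Σ_{i∈G} |λ_i|, where M = (m_i). -/

import Mathlib

open Filter Topology

noncomputable section

/-- The first uncountable ordinal `ω₁`. -/
def omega1 : Ordinal := (Cardinal.aleph 1).ord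

/-- The combinatorial operation `𝓕[𝓖]` on families of finite subsets of `ℕ`:
all unions `E₁ ∪ ⋯ ∪ Eₙ` with `E₁ < ⋯ < Eₙ` nonempty members of `𝓖` and
`(min Eᵢ)ᵢ ∈ 𝓕`. -/
def famOp (F G : Set (Finset ℕ)) : Set (Finset ℕ) :=
  {E | ∃ (n : ℕ) (Es : ℕ → Finset ℕ),
    (∀ i < n, Es i ∈ G) ∧ (∀ i < n, (Es i).Nonempty) ∧
    (∀ i j : ℕ, i < j → j < n → ∀ a ∈ Es i, ∀ b ∈ Es j, a < b) ∧
    (Finset.image (fun i => sInf ((Es i : Set ℕ))) (Finset.range n) ∈ F) ∧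
    E = (Finset.range n).biUnion Es}

/-- The first Schreier family `𝓢₁ = {E : |E| ≤ min E}`. -/
def schreierOne : Set (Finset ℕ) := {E : Finset ℕ | ∀ n ∈ E, E.card ≤ n}

/-- A system of Schreier families `(𝓢_ξ)` together with the fixed cofinal sequences
`(ξ_n)` used at countable limit ordinals: `𝓢_0 = {∅} ∪ {{n} : n ∈ ℕ}`,
`𝓢_{ξ+1} = 𝓢₁[𝓢_ξ]`, and at a countable limit `ξ`,
`𝓢_ξ = {E : ∃ n, n ≤ min E ∧ E ∈ 𝓢_{ξ_n}}` where `ξ_n ↑ ξ` and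
`𝓢_{ξ_n} ⊆ 𝓢_{ξ_{n+1}}`. -/
structure SchreierSystem where
  S : Ordinal → Set (Finset ℕ)
  seq : Ordinal → ℕ → Ordinal
  S_zero : S 0 = {E : Finset ℕ | E = ∅ ∨ ∃ n : ℕ, E = {n}}
  S_succ : ∀ ξ : Ordinal, S (ξ + 1) = famOp schreierOne (S ξ)
  seq_strictMono : ∀ ξ : Ordinal, ξ < omega1 → Order.IsSuccLimit ξ → StrictMono (seq ξ)
  seq_lt : ∀ ξ : Ordinal, ξ < omega1 → Order.IsSuccLimit ξ → ∀ n : ℕ, seq ξ n < ξ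
  seq_iSup : ∀ ξ : Ordinal, ξ < omega1 → Order.IsSuccLimit ξ → (⨆ n : ℕ, seq ξ n) = ξ
  S_seq_mono : ∀ ξ : Ordinal, ξ < omega1 → Order.IsSuccLimit ξ → ∀ n : ℕ, S (seq ξ n) ⊆ S (seq ξ (n + 1))
  S_limit : ∀ ξ : Ordinal, ξ < omega1 → Order.IsSuccLimit ξ →
    S ξ = {E : Finset ℕ | ∃ n : ℕ, (∀ m ∈ E, n ≤ m) ∧ E ∈ S (seq ξ n)}

section XSpace

/-- Finitely supported real sequences `c₀₀`. -/
abbrev c00 : Type := ℕ →₀ ℝ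

/-- The action of a functional `f ∈ c₀₀` on a vector `x ∈ c₀₀`: `f(x) = Σ_i f i * x i`. -/
def dotc (f x : c00) : ℝ := f.sum fun i a => a * x i

/-- Successive supports: every element of `supp f` is smaller than every element of
`supp g`. -/
def suppLt (f g : c00) : Prop := ∀ i ∈ f.support, ∀ j ∈ g.support, i < j

/-- The minimum of the support of `f`. -/
def minSupp (f : c00) : ℕ := sInf {i : ℕ | f i ≠ 0}

/-- The maximum of the support of `f` (`0` for `f = 0`). -/
def maxSupp (f : c00) : ℕ := f.support.sup id

/-- `α` is an `α`-average of size `ℓ` in `G`: an element of `G` of the form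
`(1/ℓ) (f_1 + ⋯ + f_d)` with `f_1 < ⋯ < f_d ∈ G`, `d ≤ ℓ` and `ℓ ≥ 2`. -/
def IsAvg (G : Set c00) (α : c00) (ℓ : ℕ) : Prop :=
  α ∈ G ∧ 2 ≤ ℓ ∧ ∃ (d : ℕ) (f : ℕ → c00), 1 ≤ d ∧ d ≤ ℓ ∧ (∀ q < d, f q ∈ G) ∧
    (∀ q : ℕ, q + 1 < d → suppLt (f q) (f (q + 1))) ∧
    α = (ℓ : ℝ)⁻¹ • ∑ q ∈ Finset.range d, f q

/-- `(α_q)_{q<d}` (with sizes `sz q`) is a very fast growing and `Fam`-admissible sequence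
of `α`-averages in `G`. -/
def IsVFGAdm (G : Set c00) (Fam : Set (Finset ℕ)) (α : ℕ → c00) (sz : ℕ → ℕ) (d : ℕ) : Prop :=
  (∀ q < d, IsAvg G (α q) (sz q)) ∧
  (∀ q : ℕ, q + 1 < d → suppLt (α q) (α (q + 1))) ∧
  (∀ q : ℕ, q + 1 < d → sz q < sz (q + 1)) ∧
  (∀ q : ℕ, q + 1 < d → maxSupp (α q) < sz (q + 1)) ∧
  ((Finset.range d).image fun q => minSupp (α q)) ∈ Fam

/-- One step of the inductive construction of the norming set: `W_{m+1}` from `W_m`. -/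
def Wstep (Fam : Set (Finset ℕ)) (G : Set c00) : Set c00 :=
  G ∪
  {g | ∃ (ℓ d : ℕ) (f : ℕ → c00), 2 ≤ ℓ ∧ 1 ≤ d ∧ d ≤ ℓ ∧ (∀ q < d, f q ∈ G) ∧
      (∀ q : ℕ, q + 1 < d → suppLt (f q) (f (q + 1))) ∧
      g = (ℓ : ℝ)⁻¹ • ∑ q ∈ Finset.range d, f q} ∪
  {g | ∃ (d : ℕ) (α : ℕ → c00) (sz : ℕ → ℕ), 1 ≤ d ∧ IsVFGAdm G Fam α sz d ∧
      g = ∑ q ∈ Finset.range d, α q}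

/-- The levels `W_m` of the norming set: `W_0 = {± e_n}` and `W_{m+1} = Wstep Fam W_m`. -/
def Wlevel (Fam : Set (Finset ℕ)) : ℕ → Set c00
  | 0 => {f | ∃ n : ℕ, f = Finsupp.single n 1 ∨ f = -Finsupp.single n 1}
  | m + 1 => Wstep Fam (Wlevel Fam m)

/-- The norming set `W = ⋃_m W_m` (for `Fam = 𝓢_{ω^ξ}` this is the norming set of
`𝔛_{0,1}^{ω^ξ}`). -/
def Wset (Fam : Set (Finset ℕ)) : Set c00 := ⋃ m : ℕ, Wlevel Fam m

/-- The norm of `𝔛_{0,1}^{ω^ξ}` on finitely supported vectors: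
`‖x‖ = sup {f(x) : f ∈ W}`. -/
noncomputable def Xnorm (Fam : Set (Finset ℕ)) (x : c00) : ℝ :=
  sSup {r : ℝ | ∃ f ∈ Wset Fam, r = dotc f x}

/-- A block sequence of the unit vector basis: nonzero finitely supported vectors with
successive supports. -/
def IsBlock (x : ℕ → c00) : Prop :=
  (∀ n, x n ≠ 0) ∧ ∀ m n : ℕ, m < n → suppLt (x m) (x n)

/-- A normalized block sequence of the unit vector basis of the space with norming
family `Fam`. -/
def IsNormBlock (Fam : Set (Finset ℕ)) (x : ℕ → c00) : Prop :=
  IsBlock x ∧ ∀ n, Xnorm Fam (x n) = 1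

end XSpace

/-- The index `α_{<ω^ξ}((x_k)) = 0`: for every `n`, every very fast growing sequence
`(α_q)` of `α`-averages in `W`, every successive sequence `(F_k)` of finite sets such
that each `(α_q)_{q ∈ F_k}` is `𝓢_{ξ_n}`-admissible (where `(ξ_n)` is the fixed sequence
defining `𝓢_{ω^ξ}`), and every subsequence `(x_{m_k})`,
`lim_k Σ_{q ∈ F_k} |α_q(x_{m_k})| = 0`. -/
def AlphaZero (SS : SchreierSystem) (ξ : Ordinal) (x : ℕ → c00) : Prop :=
  ∀ (n : ℕ) (α : ℕ → c00) (sz : ℕ → ℕ),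
    (∀ q : ℕ, IsAvg (Wset (SS.S (Ordinal.omega0 ^ ξ))) (α q) (sz q)) →
    (∀ q : ℕ, suppLt (α q) (α (q + 1))) →
    (∀ q : ℕ, sz q < sz (q + 1)) →
    (∀ q : ℕ, maxSupp (α q) < sz (q + 1)) →
    ∀ F : ℕ → Finset ℕ,
      (∀ m k : ℕ, m < k → ∀ i ∈ F m, ∀ j ∈ F k, i < j) →
      (∀ k : ℕ, ((F k).image fun q => minSupp (α q)) ∈
          SS.S (SS.seq (Ordinal.omega0 ^ ξ) n)) →
      ∀ m : ℕ → ℕ, StrictMono m →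
        Filter.Tendsto (fun k => ∑ q ∈ F k, |dotc (α q) (x (m k))|)
          Filter.atTop (nhds 0)


section OrdLemmas
open Ordinal

lemma add_lt_omega1 {a b : Ordinal} (ha : a < omega1) (hb : b < omega1) :
    a + b < omega1 :=
  Ordinal.isPrincipal_add_ord (Cardinal.aleph0_le_aleph 1) ha hb

lemma omega0_lt_omega1' : Ordinal.omega0 < omega1 := by
  rw [omega1, Cardinal.lt_ord, Ordinal.card_omega0]
  exact Cardinal.aleph0_lt_aleph_one

lemma opow_lt_omega1 : ∀ ξ : Ordinal, ξ < omega1 → Ordinal.omega0 ^ ξ < omega1 := by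
  intro ξ
  induction ξ using Ordinal.induction with
  | h ξ IH =>
    intro hξ
    rcases Ordinal.zero_or_succ_or_isSuccLimit ξ with h0 | ⟨b, rfl⟩ | hlim
    · subst h0
      rw [opow_zero, omega1, Cardinal.lt_ord, Ordinal.card_one]
      exact lt_of_lt_of_le Cardinal.one_lt_aleph0 (Cardinal.aleph0_le_aleph 1)
    · have hb : b < omega1 := lt_trans (Order.lt_succ b) hξ
      rw [Ordinal.opow_succ, omega1, Cardinal.lt_ord, Ordinal.card_mul]
      exact Cardinal.mul_lt_of_lt (Cardinal.aleph0_le_aleph 1)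
        ((Cardinal.lt_ord).1 (IH b (Order.lt_succ b) hb))
        ((Cardinal.lt_ord).1 omega0_lt_omega1')
    · rw [Ordinal.opow_limit Ordinal.omega0_ne_zero hlim]
      have hcount : Countable (Set.Iio ξ) := by
        have : (Set.Iio ξ).Countable :=
          (Cardinal.countable_iff_lt_aleph_one _).2 (by
            rw [Ordinal.mk_Iio_ordinal, Cardinal.lift_lt_aleph_one]
            exact (Cardinal.lt_ord).1 hξ)
        exact this.to_subtype
      have hω : omega1 = Ordinal.omega 1 := by rw [omega1, Cardinal.ord_aleph]
      rw [hω]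
      exact Ordinal.iSup_lt_omega_one
        (fun i => hω ▸ IH _ i.2 (lt_trans i.2 hξ))

end OrdLemmas

section SchreierLemmas
open Ordinal

lemma empty_mem_S (SS : SchreierSystem) : ∀ β : Ordinal, β < omega1 →
    (∅ : Finset ℕ) ∈ SS.S β := by
  intro β
  induction β using Ordinal.induction with
  | h β IH =>
    intro hβ
    rcases Ordinal.zero_or_succ_or_isSuccLimit β with h0 | ⟨γ, hsucc⟩ | hlim
    · subst h0; rw [SS.S_zero]; exact Or.inl rfl
    · have : β = γ + 1 := by rw [Ordinal.add_one_eq_succ]; exact hsucc.symm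
      subst this
      rw [SS.S_succ]
      exact ⟨0, fun _ => ∅, by simp, by simp, by simp, by simp [schreierOne], by simp⟩
    · rw [SS.S_limit β hβ hlim]
      exact ⟨0, by simp, IH _ (SS.seq_lt β hβ hlim 0) (lt_trans (SS.seq_lt β hβ hlim 0) hβ)⟩

lemma S_almost_mono (SS : SchreierSystem) : ∀ β : Ordinal, β < omega1 →
    ∀ a : Ordinal, a < β →
    ∃ N : ℕ, ∀ E ∈ SS.S a, (∀ m ∈ E, N ≤ m) → E ∈ SS.S β := by
  intro β
  induction β using Ordinal.induction with
  | h β IH =>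
    intro hβ a ha
    rcases Ordinal.zero_or_succ_or_isSuccLimit β with h0 | ⟨γ, hsucc⟩ | hlim
    · subst h0; exact absurd ha (not_lt_of_ge (zero_le (a := a)))
    · have hβγ : β = γ + 1 := by rw [Ordinal.add_one_eq_succ]; exact hsucc.symm
      subst hβγ
      have hγ1 : γ < γ + 1 := by rw [Ordinal.add_one_eq_succ]; exact Order.lt_succ γ
      have hγ : γ < omega1 := lt_trans hγ1 hβ
      have step : ∀ E ∈ SS.S γ, (∀ m ∈ E, 1 ≤ m) → E ∈ SS.S (γ + 1) := by
        intro E hE hmin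
        rcases E.eq_empty_or_nonempty with rfl | hne
        · exact empty_mem_S SS _ hβ
        · rw [SS.S_succ]
          refine ⟨1, fun _ => E, fun i _ => hE, fun i _ => hne, by omega, ?_, by simp⟩
          intro mm hmm
          simp only [Finset.range_one, Finset.image_singleton, Finset.mem_singleton] at hmm
          subst hmm
          have h1 : sInf (↑E : Set ℕ) ∈ E := by
            have := Nat.sInf_mem (s := (↑E : Set ℕ)) (by exact_mod_cast hne.to_set)
            exact_mod_cast this
          calc (Finset.image (fun i => sInf ((fun _ => E) i : Set ℕ)) (Finset.range 1)).card
              ≤ 1 := by simp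
            _ ≤ sInf (↑E : Set ℕ) := hmin _ h1
      have hale : a ≤ γ := by
        have := Order.lt_succ_iff.1 (by rw [← Ordinal.add_one_eq_succ]; exact ha)
        exact this
      rcases lt_or_eq_of_le hale with halt | rfl
      · obtain ⟨N₁, hN₁⟩ := IH γ hγ1 hγ a halt
        refine ⟨max N₁ 1, fun E hE hmin => ?_⟩
        exact step E (hN₁ E hE fun m hm => le_trans (le_max_left _ _) (hmin m hm))
          fun m hm => le_trans (le_max_right _ _) (hmin m hm)
      · exact ⟨1, step⟩
    · have hk : ∃ k : ℕ, a < SS.seq β k := by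
        by_contra hcon
        push_neg at hcon
        have : (⨆ n : ℕ, SS.seq β n) ≤ a := ciSup_le' hcon
        rw [SS.seq_iSup β hβ hlim] at this
        exact absurd ha (not_lt_of_ge this)
      obtain ⟨k, hak⟩ := hk
      have hsk : SS.seq β k < β := SS.seq_lt β hβ hlim k
      obtain ⟨N₁, hN₁⟩ := IH (SS.seq β k) hsk (lt_trans hsk hβ) a hak
      refine ⟨max N₁ k, fun E hE hmin => ?_⟩
      rw [SS.S_limit β hβ hlim]
      exact ⟨k, fun m hm => le_trans (le_max_right _ _) (hmin m hm),
        hN₁ E hE fun m hm => le_trans (le_max_left _ _) (hmin m hm)⟩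

end SchreierLemmas

section LemmaC
open Ordinal

lemma sInf_finset_mem {A : Finset ℕ} (h : A.Nonempty) : sInf (↑A : Set ℕ) ∈ A := by
  have := Nat.sInf_mem (s := (↑A : Set ℕ)) (by exact_mod_cast h.to_set)
  exact_mod_cast this

lemma sInf_finset_le {A : Finset ℕ} {a : ℕ} (ha : a ∈ A) : sInf (↑A : Set ℕ) ≤ a :=
  Nat.sInf_le (by exact_mod_cast ha)

lemma card_image_sInf {Gs : ℕ → Finset ℕ} {r : ℕ}
    (hne : ∀ t < r, (Gs t).Nonempty)
    (hsuc : ∀ t t' : ℕ, t < t' → t' < r → ∀ a ∈ Gs t, ∀ b ∈ Gs t', a < b) :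
    (Finset.image (fun t => sInf ((Gs t : Set ℕ))) (Finset.range r)).card = r := by
  rw [Finset.card_image_of_injOn, Finset.card_range]
  intro t ht t' ht' heq
  simp only [Finset.coe_range, Set.mem_Iio] at ht ht'
  by_contra hne'
  rcases Nat.lt_or_ge t t' with h | h
  · exact absurd heq (Nat.ne_of_lt (hsuc t t' h ht' _ (sInf_finset_mem (hne t ht)) _
      (sInf_finset_mem (hne t' ht'))))
  · rcases Nat.lt_or_ge t' t with h2 | h2
    · exact absurd heq.symm (Nat.ne_of_lt (hsuc t' t h2 ht _ (sInf_finset_mem (hne t' ht')) _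
        (sInf_finset_mem (hne t ht))))
    · omega

lemma lemmaC (SS : SchreierSystem) (η : Ordinal) (hη : η < omega1) :
    ∀ ζ : Ordinal, ζ < omega1 →
    ∃ φ : ℕ → ℕ, (∀ i, i ≤ φ i) ∧
      ∀ G : Finset ℕ, G ∈ SS.S ζ → ∀ E : ℕ → Finset ℕ,
        (∀ i ∈ G, E i ∈ SS.S η) → (∀ i ∈ G, (E i).Nonempty) →
        (∀ i ∈ G, ∀ j ∈ G, i < j → ∀ a ∈ E i, ∀ b ∈ E j, a < b) →
        (∀ i ∈ G, ∀ a ∈ E i, φ i ≤ a) →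
        G.biUnion E ∈ SS.S (η + ζ) := by
  intro ζ
  induction ζ using Ordinal.induction with
  | h ζ IH =>
    intro hζ
    rcases Ordinal.zero_or_succ_or_isSuccLimit ζ with h0 | ⟨γ, hsucc⟩ | hlim
    · subst h0
      refine ⟨id, fun i => le_rfl, ?_⟩
      intro G hG E hE hne hsuc hphi
      rw [add_zero]
      rw [SS.S_zero] at hG
      rcases hG with rfl | ⟨i, rfl⟩
      · simpa using empty_mem_S SS η hη
      · simpa using hE i (Finset.mem_singleton_self i)
    · have hζγ : ζ = γ + 1 := by rw [Ordinal.add_one_eq_succ]; exact hsucc.symm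
      subst hζγ
      have hγ1 : γ < γ + 1 := by rw [Ordinal.add_one_eq_succ]; exact Order.lt_succ γ
      have hγ : γ < omega1 := lt_trans hγ1 hζ
      obtain ⟨φ, hφid, hφ⟩ := IH γ hγ1 hγ
      refine ⟨φ, hφid, ?_⟩
      intro G hG E hE hne hsuc hphi
      rw [SS.S_succ] at hG
      obtain ⟨r, Gs, hGs, hGsne, hGsuc, hGim, hGeq⟩ := hG
      have hmemG : ∀ {t : ℕ}, t < r → ∀ {i : ℕ}, i ∈ Gs t → i ∈ G := by
        intro t ht i hi
        rw [hGeq]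
        exact Finset.mem_biUnion.2 ⟨t, Finset.mem_range.2 ht, hi⟩
      have hadd : η + (γ + 1) = (η + γ) + 1 := (add_assoc η γ 1).symm
      rw [hadd, SS.S_succ]
      have hUne : ∀ t < r, ((Gs t).biUnion E).Nonempty := by
        intro t ht
        obtain ⟨i, hi⟩ := hGsne t ht
        obtain ⟨a, ha⟩ := hne i (hmemG ht hi)
        exact ⟨a, Finset.mem_biUnion.2 ⟨i, hi, ha⟩⟩
      have hUsuc : ∀ t t' : ℕ, t < t' → t' < r →
          ∀ a ∈ (Gs t).biUnion E, ∀ b ∈ (Gs t').biUnion E, a < b := by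
        intro t t' htt' ht' a ha b hb
        obtain ⟨i, hi, hai⟩ := Finset.mem_biUnion.1 ha
        obtain ⟨j, hj, hbj⟩ := Finset.mem_biUnion.1 hb
        exact hsuc i (hmemG (lt_trans htt' ht') hi) j (hmemG ht' hj)
          (hGsuc t t' htt' ht' i hi j hj) a hai b hbj
      refine ⟨r, fun t => (Gs t).biUnion E, ?_, hUne, hUsuc, ?_, ?_⟩
      · intro t ht
        exact hφ (Gs t) (hGs t ht) E (fun i hi => hE i (hmemG ht hi))
          (fun i hi => hne i (hmemG ht hi))
          (fun i hi j hj hij => hsuc i (hmemG ht hi) j (hmemG ht hj) hij)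
          (fun i hi a ha => hphi i (hmemG ht hi) a ha)
      · -- schreierOne condition
        intro mm hmm
        obtain ⟨t, ht, hteq⟩ := Finset.mem_image.1 hmm
        rw [Finset.mem_range] at ht
        have hcard : (Finset.image (fun t => sInf (((Gs t).biUnion E : Set ℕ)))
            (Finset.range r)).card ≤ r := le_trans Finset.card_image_le (by simp)
        refine le_trans hcard ?_
        -- r ≤ mm
        have hmmU : mm ∈ (Gs t).biUnion E := hteq ▸ sInf_finset_mem (hUne t ht)
        obtain ⟨i, hi, hmi⟩ := Finset.mem_biUnion.1 hmmU
        have hr_le : r ≤ sInf ((Gs t : Set ℕ)) := by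
          have hGcard := hGim (sInf ((Gs t : Set ℕ)))
            (Finset.mem_image.2 ⟨t, Finset.mem_range.2 ht, rfl⟩)
          rwa [card_image_sInf hGsne hGsuc] at hGcard
        calc r ≤ sInf ((Gs t : Set ℕ)) := hr_le
          _ ≤ i := sInf_finset_le hi
          _ ≤ φ i := hφid i
          _ ≤ mm := hphi i (hmemG ht hi) mm hmi
      · rw [hGeq]
        exact Finset.biUnion_biUnion (Finset.range r) Gs E
    · -- limit case
      have hseqlt : ∀ p : ℕ, SS.seq ζ p < ζ := SS.seq_lt ζ hζ hlim
      have hseqo : ∀ p : ℕ, SS.seq ζ p < omega1 := fun p => lt_trans (hseqlt p) hζ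
      choose φp hφpid hφp using fun p : ℕ => IH (SS.seq ζ p) (hseqlt p) (hseqo p)
      choose Np hNp using fun p : ℕ => S_almost_mono SS (η + ζ) (add_lt_omega1 hη hζ)
        (η + SS.seq ζ p) ((add_lt_add_iff_left η).2 (hseqlt p))
      refine ⟨fun i => max i ((Finset.range (i+1)).sup fun p => max (φp p i) (Np p)),
        fun i => le_max_left _ _, ?_⟩
      intro G hG E hE hne hsuc hphi
      rw [SS.S_limit ζ hζ hlim] at hG
      obtain ⟨p, hpmin, hGp⟩ := hG
      rcases G.eq_empty_or_nonempty with rfl | hGne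
      · simpa using empty_mem_S SS _ (add_lt_omega1 hη hζ)
      have hbound : ∀ i ∈ G, ∀ a ∈ E i, max (φp p i) (Np p) ≤ a := by
        intro i hi a ha
        refine le_trans ?_ (hphi i hi a ha)
        refine le_trans (Finset.le_sup (f := fun q => max (φp q i) (Np q))
          (Finset.mem_range.2 (Nat.lt_succ_of_le (hpmin i hi)))) (le_max_right _ _)
      have hU : G.biUnion E ∈ SS.S (η + SS.seq ζ p) :=
        hφp p G hGp E hE hne hsuc
          (fun i hi a ha => le_trans (le_max_left _ _) (hbound i hi a ha))
      refine hNp p _ hU ?_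
      intro mm hmm
      obtain ⟨i, hi, hmi⟩ := Finset.mem_biUnion.1 hmm
      exact le_trans (le_max_right _ _) (hbound i hi mm hmi)

end LemmaC

section Wfacts

lemma minSupp_set_eq (f : c00) : {i : ℕ | f i ≠ 0} = (↑f.support : Set ℕ) := by
  ext i; simp [Finsupp.mem_support_iff]

lemma minSupp_mem {f : c00} (h : f ≠ 0) : minSupp f ∈ f.support := by
  rw [minSupp, minSupp_set_eq]
  exact sInf_finset_mem (Finsupp.support_nonempty_iff.2 h)

lemma minSupp_le {f : c00} {i : ℕ} (h : i ∈ f.support) : minSupp f ≤ i := by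
  rw [minSupp, minSupp_set_eq]
  exact sInf_finset_le h

lemma le_maxSupp {f : c00} {i : ℕ} (h : i ∈ f.support) : i ≤ maxSupp f :=
  Finset.le_sup (f := id) h

lemma maxSupp_mem {f : c00} (h : f ≠ 0) : maxSupp f ∈ f.support := by
  obtain ⟨b, hb, he⟩ := Finset.exists_mem_eq_sup f.support
    (Finsupp.support_nonempty_iff.2 h) id
  rw [maxSupp, he]; exact hb

lemma minSupp_le_maxSupp {f : c00} (h : f ≠ 0) : minSupp f ≤ maxSupp f :=
  minSupp_le (maxSupp_mem h)

lemma suppLt_iff {f g : c00} (hf : f ≠ 0) (hg : g ≠ 0) :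
    suppLt f g ↔ maxSupp f < minSupp g := by
  constructor
  · intro h
    exact h _ (maxSupp_mem hf) _ (minSupp_mem hg)
  · intro h i hi j hj
    exact lt_of_le_of_lt (le_maxSupp hi) (lt_of_lt_of_le h (minSupp_le hj))

lemma suppLt_chain {f : ℕ → c00} {d : ℕ}
    (hnz : ∀ q < d, f q ≠ 0)
    (hlt : ∀ q : ℕ, q + 1 < d → suppLt (f q) (f (q + 1))) :
    ∀ q q' : ℕ, q < q' → q' < d → suppLt (f q) (f q') := by
  have key : ∀ q q' : ℕ, q < q' → q' < d → maxSupp (f q) < minSupp (f q') := by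
    intro q q' hqq' hq'
    induction q' with
    | zero => omega
    | succ r IHr =>
      rcases Nat.lt_or_ge q r with h | h
      · have h1 := IHr h (lt_trans (Nat.lt_succ_self r) hq')
        refine lt_of_lt_of_le h1 (le_trans (minSupp_le_maxSupp (hnz r (by omega))) ?_)
        exact le_of_lt ((suppLt_iff (hnz r (by omega)) (hnz (r+1) hq')).1 (hlt r hq'))
      · have : q = r := by omega
        subst this
        exact (suppLt_iff (hnz q (by omega)) (hnz (q+1) hq')).1 (hlt q hq')
  intro q q' hqq' hq'
  exact (suppLt_iff (hnz q (by omega)) (hnz q' hq')).2 (key q q' hqq' hq')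

lemma dotc_eq_sum {f x : c00} {s : Finset ℕ} (h : f.support ⊆ s) :
    dotc f x = ∑ i ∈ s, f i * x i := by
  rw [dotc, Finsupp.sum]
  exact Finset.sum_subset h (fun i _ hi => by
    rw [Finsupp.notMem_support_iff.1 hi, zero_mul])

lemma dotc_zero_left (x : c00) : dotc 0 x = 0 := by
  simp [dotc]

lemma dotc_add_left (f g x : c00) : dotc (f + g) x = dotc f x + dotc g x := by
  rw [dotc_eq_sum (s := f.support ∪ g.support) Finsupp.support_add,
    dotc_eq_sum (s := f.support ∪ g.support) Finset.subset_union_left,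
    dotc_eq_sum (s := f.support ∪ g.support) Finset.subset_union_right,
    ← Finset.sum_add_distrib]
  exact Finset.sum_congr rfl (fun i _ => by rw [Finsupp.add_apply, add_mul])

lemma dotc_sum_left {β : Type*} (s : Finset β) (f : β → c00) (x : c00) :
    dotc (∑ q ∈ s, f q) x = ∑ q ∈ s, dotc (f q) x := by
  classical
  induction s using Finset.induction_on with
  | empty => simp [dotc_zero_left]
  | insert _ _ hns IH =>
    rw [Finset.sum_insert hns, Finset.sum_insert hns, dotc_add_left, IH]

lemma dotc_smul_left (c : ℝ) (f x : c00) : dotc (c • f) x = c * dotc f x := by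
  rw [dotc_eq_sum (s := f.support) Finsupp.support_smul,
    dotc_eq_sum (s := f.support) (subset_refl _), Finset.mul_sum]
  exact Finset.sum_congr rfl (fun i _ => by
    rw [Finsupp.smul_apply, smul_eq_mul, mul_assoc])

lemma dotc_smul_right (c : ℝ) (f x : c00) : dotc f (c • x) = c * dotc f x := by
  rw [dotc_eq_sum (s := f.support) (subset_refl _),
    dotc_eq_sum (s := f.support) (subset_refl _), Finset.mul_sum]
  exact Finset.sum_congr rfl (fun i _ => by
    rw [Finsupp.smul_apply, smul_eq_mul]; ring)

lemma dotc_add_right (f x y : c00) : dotc f (x + y) = dotc f x + dotc f y := by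
  rw [dotc_eq_sum (s := f.support) (subset_refl _),
    dotc_eq_sum (s := f.support) (subset_refl _),
    dotc_eq_sum (s := f.support) (subset_refl _), ← Finset.sum_add_distrib]
  exact Finset.sum_congr rfl (fun i _ => by rw [Finsupp.add_apply, mul_add])

lemma dotc_sum_right {β : Type*} (s : Finset β) (f : c00) (y : β → c00) :
    dotc f (∑ q ∈ s, y q) = ∑ q ∈ s, dotc f (y q) := by
  classical
  induction s using Finset.induction_on with
  | empty => simp [dotc]
  | insert _ _ hns IH =>
    rw [Finset.sum_insert hns, Finset.sum_insert hns, dotc_add_right, IH]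

lemma dotc_neg_left (f x : c00) : dotc (-f) x = - dotc f x := by
  have : (-f) = (-1 : ℝ) • f := by rw [neg_one_smul]
  rw [this, dotc_smul_left]; ring

lemma dotc_eq_zero_of_apart {f x : c00} (h : ∀ i ∈ f.support, x i = 0) :
    dotc f x = 0 := by
  rw [dotc, Finsupp.sum]
  exact Finset.sum_eq_zero (fun i hi => by rw [h i hi, mul_zero])

lemma dotc_eq_zero_left_of_lt {f x : c00} (h : maxSupp x < minSupp f) :
    dotc f x = 0 := by
  refine dotc_eq_zero_of_apart (fun i hi => ?_)
  by_contra hxi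
  have hix : i ∈ x.support := Finsupp.mem_support_iff.2 hxi
  exact absurd (lt_of_lt_of_le h (minSupp_le hi)) (not_lt_of_ge (le_maxSupp hix))

lemma dotc_eq_zero_right_of_lt {f x : c00} (h : maxSupp f < minSupp x) :
    dotc f x = 0 := by
  refine dotc_eq_zero_of_apart (fun i hi => ?_)
  by_contra hxi
  have hix : i ∈ x.support := Finsupp.mem_support_iff.2 hxi
  exact absurd (lt_of_lt_of_le h (minSupp_le hix)) (not_lt_of_ge (le_maxSupp hi))

end Wfacts

section Wmore
variable {Fam : Set (Finset ℕ)}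

lemma Wlevel_succ_mono (Fam : Set (Finset ℕ)) (m : ℕ) :
    Wlevel Fam m ⊆ Wlevel Fam (m + 1) :=
  fun f hf => Or.inl (Or.inl hf)

lemma Wlevel_mono (Fam : Set (Finset ℕ)) {m m' : ℕ} (h : m ≤ m') :
    Wlevel Fam m ⊆ Wlevel Fam m' := by
  induction m' with
  | zero => rw [Nat.le_zero.1 h]
  | succ k IH =>
    rcases Nat.lt_or_ge m (k+1) with h2 | h2
    · exact subset_trans (IH (Nat.lt_succ_iff.1 h2)) (Wlevel_succ_mono Fam k)
    · rw [le_antisymm h h2]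

lemma sum_succ_ne_zero_and_bound {f : ℕ → c00} {d : ℕ} (hd : 1 ≤ d)
    (hnz : ∀ q < d, f q ≠ 0) (hbd : ∀ q < d, ∀ i, |f q i| ≤ 1)
    (hlt : ∀ q : ℕ, q + 1 < d → suppLt (f q) (f (q + 1))) :
    (∑ q ∈ Finset.range d, f q) ≠ 0 ∧ ∀ i, |(∑ q ∈ Finset.range d, f q) i| ≤ 1 := by
  have happly : ∀ i, (∑ q ∈ Finset.range d, f q) i = ∑ q ∈ Finset.range d, f q i := by
    intro i
    exact Finsupp.finset_sum_apply _ _ _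
  have huniq : ∀ i, ∀ q0 < d, f q0 i ≠ 0 → ∀ q < d, q ≠ q0 → f q i = 0 := by
    intro i q0 hq0 hi q hq hne
    by_contra hqi
    have h1 : i ∈ (f q0).support := Finsupp.mem_support_iff.2 hi
    have h2 : i ∈ (f q).support := Finsupp.mem_support_iff.2 hqi
    rcases Nat.lt_or_ge q q0 with h | h
    · exact absurd (suppLt_chain hnz hlt q q0 h hq0 i h2 i h1) (lt_irrefl i)
    · have : q0 < q := lt_of_le_of_ne h (Ne.symm hne)
      exact absurd (suppLt_chain hnz hlt q0 q this hq i h1 i h2) (lt_irrefl i)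
  constructor
  · -- nonzero at i0 = minSupp (f 0)
    have h0 : (0:ℕ) < d := hd
    set i0 := minSupp (f 0) with hi0
    have hmem : i0 ∈ (f 0).support := minSupp_mem (hnz 0 h0)
    have hval : (∑ q ∈ Finset.range d, f q) i0 = f 0 i0 := by
      rw [happly]
      refine Finset.sum_eq_single_of_mem 0 (Finset.mem_range.2 h0) ?_
      intro q hq hne
      exact huniq i0 0 h0 (Finsupp.mem_support_iff.1 hmem) q (Finset.mem_range.1 hq) hne
    intro hzero
    rw [hzero] at hval
    exact absurd hval.symm (Finsupp.mem_support_iff.1 hmem)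
  · intro i
    rw [happly]
    by_cases hex : ∃ q0, q0 < d ∧ f q0 i ≠ 0
    · obtain ⟨q0, hq0, hne⟩ := hex
      have : ∑ q ∈ Finset.range d, f q i = f q0 i := by
        refine Finset.sum_eq_single_of_mem q0 (Finset.mem_range.2 hq0) ?_
        intro q hq hqq
        exact huniq i q0 hq0 hne q (Finset.mem_range.1 hq) hqq
      rw [this]
      exact hbd q0 hq0 i
    · push_neg at hex
      have : ∑ q ∈ Finset.range d, f q i = 0 :=
        Finset.sum_eq_zero (fun q hq => hex q (Finset.mem_range.1 hq))
      rw [this]; simp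

lemma Wlevel_ne_zero_bound : ∀ m : ℕ, ∀ f ∈ Wlevel Fam m, f ≠ 0 ∧ ∀ i, |f i| ≤ 1 := by
  intro m
  induction m with
  | zero =>
    rintro f ⟨n, rfl | rfl⟩
    · refine ⟨by simp [Finsupp.single_eq_zero], fun i => ?_⟩
      rw [Finsupp.single_apply]
      split <;> simp
    · refine ⟨by simp [Finsupp.single_eq_zero], fun i => ?_⟩
      rw [Finsupp.neg_apply, abs_neg, Finsupp.single_apply]
      split <;> simp
  | succ m IH =>
    rintro f ((hf | hf) | hf)
    · exact IH f hf
    · obtain ⟨ℓ, d, g, hℓ, hd, hdℓ, hgW, hglt, rfl⟩ := hf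
      obtain ⟨hS, hSb⟩ := sum_succ_ne_zero_and_bound hd
        (fun q hq => (IH _ (hgW q hq)).1) (fun q hq => (IH _ (hgW q hq)).2) hglt
      have hℓ2 : (2:ℝ) ≤ (ℓ:ℝ) := by exact_mod_cast hℓ
      have hℓ0 : (ℓ:ℝ) ≠ 0 := by linarith
      refine ⟨smul_ne_zero (inv_ne_zero hℓ0) hS, fun i => ?_⟩
      rw [Finsupp.smul_apply, smul_eq_mul, abs_mul]
      have h1 : |(ℓ:ℝ)⁻¹| ≤ 1 := by
        rw [abs_inv, abs_of_nonneg (by linarith : (0:ℝ) ≤ (ℓ:ℝ))]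
        rw [inv_le_one_iff₀]
        right; linarith
      calc |(ℓ:ℝ)⁻¹| * |(∑ q ∈ Finset.range d, g q) i| ≤ 1 * 1 :=
            mul_le_mul h1 (hSb i) (abs_nonneg _) zero_le_one
        _ = 1 := one_mul 1
    · obtain ⟨d, α, sz, hd, hadm, rfl⟩ := hf
      exact sum_succ_ne_zero_and_bound hd
        (fun q hq => (IH _ ((hadm.1 q hq).1)).1)
        (fun q hq => (IH _ ((hadm.1 q hq).1)).2) hadm.2.1

end Wmore

section Wclose
variable {Fam : Set (Finset ℕ)}

lemma neg_sum_c00 {β : Type*} (s : Finset β) (f : β → c00) :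
    -(∑ q ∈ s, f q) = ∑ q ∈ s, -(f q) := by
  exact (Finset.sum_neg_distrib _).symm

lemma minSupp_neg (f : c00) : minSupp (-f) = minSupp f := by
  unfold minSupp
  congr 1
  ext i
  simp

lemma maxSupp_neg (f : c00) : maxSupp (-f) = maxSupp f := by
  unfold maxSupp
  rw [Finsupp.support_neg]

lemma Wlevel_neg_mem : ∀ m : ℕ, ∀ f ∈ Wlevel Fam m, -f ∈ Wlevel Fam m := by
  intro m
  induction m with
  | zero =>
    rintro f ⟨n, rfl | rfl⟩
    · exact ⟨n, Or.inr rfl⟩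
    · exact ⟨n, Or.inl (neg_neg _)⟩
  | succ m IH =>
    rintro f ((hf | hf) | hf)
    · exact Or.inl (Or.inl (IH f hf))
    · obtain ⟨ℓ, d, g, hℓ, hd, hdℓ, hgW, hglt, rfl⟩ := hf
      refine Or.inl (Or.inr ⟨ℓ, d, fun q => -(g q), hℓ, hd, hdℓ,
        fun q hq => IH _ (hgW q hq), ?_, ?_⟩)
      · intro q hq i hi j hj
        rw [Finsupp.support_neg] at hi hj
        exact hglt q hq i hi j hj
      · rw [← smul_neg, neg_sum_c00]
    · obtain ⟨d, α, sz, hd, ⟨havg, hslt, hsz, hms, him⟩, rfl⟩ := hf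
      refine Or.inr ⟨d, fun q => -(α q), sz, hd, ⟨?_, ?_, hsz, ?_, ?_⟩, ?_⟩
      · intro q hq
        obtain ⟨hmem, hℓ2, d', g, hd', hd'ℓ, hgW, hglt, heq⟩ := havg q hq
        refine ⟨IH _ hmem, hℓ2, d', fun t => -(g t), hd', hd'ℓ,
          fun t ht => IH _ (hgW t ht), ?_, ?_⟩
        · intro t ht i hi j hj
          rw [Finsupp.support_neg] at hi hj
          exact hglt t ht i hi j hj
        · show -(α q) = _
          rw [heq, ← smul_neg, neg_sum_c00]
      · intro q hq i hi j hj
        rw [Finsupp.support_neg] at hi hj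
        exact hslt q hq i hi j hj
      · intro q hq
        rw [maxSupp_neg]
        exact hms q hq
      · have : (Finset.range d).image (fun q => minSupp (-(α q))) =
            (Finset.range d).image (fun q => minSupp (α q)) := by
          refine Finset.image_congr ?_
          intro q _
          exact minSupp_neg (α q)
        rw [this]
        exact him
      · exact neg_sum_c00 _ _

lemma Wset_neg_mem {f : c00} (hf : f ∈ Wset Fam) : -f ∈ Wset Fam := by
  obtain ⟨s, ⟨m, rfl⟩, hm⟩ := hf
  exact ⟨_, ⟨m, rfl⟩, Wlevel_neg_mem m f hm⟩

lemma Wset_ne_zero {f : c00} (hf : f ∈ Wset Fam) : f ≠ 0 := by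
  obtain ⟨s, ⟨m, rfl⟩, hm⟩ := hf
  exact (Wlevel_ne_zero_bound m f hm).1

lemma Wset_bound {f : c00} (hf : f ∈ Wset Fam) : ∀ i, |f i| ≤ 1 := by
  obtain ⟨s, ⟨m, rfl⟩, hm⟩ := hf
  exact (Wlevel_ne_zero_bound m f hm).2

lemma Wlevel_subset_Wset (m : ℕ) : Wlevel Fam m ⊆ Wset Fam :=
  fun f hf => ⟨_, ⟨m, rfl⟩, hf⟩

lemma Wset_mem_level {f : c00} (hf : f ∈ Wset Fam) : ∃ m, f ∈ Wlevel Fam m := by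
  obtain ⟨s, ⟨m, rfl⟩, hm⟩ := hf
  exact ⟨m, hm⟩

lemma IsAvg_mono {G G' : Set c00} (h : G ⊆ G') {a : c00} {ℓ : ℕ} (ha : IsAvg G a ℓ) :
    IsAvg G' a ℓ := by
  obtain ⟨hmem, hℓ2, d, g, hd, hdℓ, hgW, hglt, heq⟩ := ha
  exact ⟨h hmem, hℓ2, d, g, hd, hdℓ, fun q hq => h (hgW q hq), hglt, heq⟩

lemma IsAvg_level {a : c00} {ℓ : ℕ} (ha : IsAvg (Wset Fam) a ℓ) :
    ∃ m : ℕ, IsAvg (Wlevel Fam m) a ℓ := by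
  obtain ⟨hmem, hℓ2, d, g, hd, hdℓ, hgW, hglt, heq⟩ := ha
  obtain ⟨m0, hm0⟩ := Wset_mem_level hmem
  have hch : ∀ q : ℕ, ∃ mq : ℕ, q < d → g q ∈ Wlevel Fam mq := by
    intro q
    by_cases hq : q < d
    · obtain ⟨mq, hmq⟩ := Wset_mem_level (hgW q hq)
      exact ⟨mq, fun _ => hmq⟩
    · exact ⟨0, fun h => absurd h hq⟩
  choose lev hlev using hch
  refine ⟨max m0 ((Finset.range d).sup lev), ⟨?_, hℓ2, d, g, hd, hdℓ, ?_, hglt, heq⟩⟩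
  · exact Wlevel_mono Fam (le_max_left _ _) hm0
  · intro q hq
    refine Wlevel_mono Fam (le_trans (Finset.le_sup (Finset.mem_range.2 hq))
      (le_max_right _ _)) (hlev q hq)

lemma Wset_vfg_sum {A : ℕ → c00} {SZ : ℕ → ℕ} {d : ℕ} (hd : 1 ≤ d)
    (hadm : IsVFGAdm (Wset Fam) Fam A SZ d) :
    (∑ q ∈ Finset.range d, A q) ∈ Wset Fam := by
  obtain ⟨havg, hslt, hsz, hms, him⟩ := hadm
  have hch : ∀ q : ℕ, ∃ mq : ℕ, q < d → IsAvg (Wlevel Fam mq) (A q) (SZ q) := by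
    intro q
    by_cases hq : q < d
    · obtain ⟨mq, hmq⟩ := IsAvg_level (havg q hq)
      exact ⟨mq, fun _ => hmq⟩
    · exact ⟨0, fun h => absurd h hq⟩
  choose lev hlev using hch
  set M := (Finset.range d).sup lev with hM
  refine Wlevel_subset_Wset (M + 1) (Or.inr ⟨d, A, SZ, hd, ⟨?_, hslt, hsz, hms, him⟩, rfl⟩)
  intro q hq
  exact IsAvg_mono (Wlevel_mono Fam (Finset.le_sup (Finset.mem_range.2 hq))) (hlev q hq)

lemma Xnorm_bddAbove (Fam : Set (Finset ℕ)) (x : c00) :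
    BddAbove {r : ℝ | ∃ f ∈ Wset Fam, r = dotc f x} := by
  refine ⟨∑ i ∈ x.support, |x i|, ?_⟩
  rintro r ⟨f, hf, rfl⟩
  have h1 : dotc f x = ∑ i ∈ f.support ∪ x.support, f i * x i :=
    dotc_eq_sum Finset.subset_union_left
  rw [h1]
  calc ∑ i ∈ f.support ∪ x.support, f i * x i
      ≤ ∑ i ∈ f.support ∪ x.support, |x i| := by
        refine Finset.sum_le_sum (fun i _ => ?_)
        calc f i * x i ≤ |f i * x i| := le_abs_self _
          _ = |f i| * |x i| := abs_mul _ _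
          _ ≤ 1 * |x i| := mul_le_mul_of_nonneg_right (Wset_bound hf i) (abs_nonneg _)
          _ = |x i| := one_mul _
    _ = ∑ i ∈ x.support, |x i| := by
        refine (Finset.sum_subset Finset.subset_union_right ?_).symm
        intro i _ hi
        rw [Finsupp.notMem_support_iff.1 hi, abs_zero]

lemma dotc_le_Xnorm {f x : c00} (hf : f ∈ Wset Fam) : dotc f x ≤ Xnorm Fam x :=
  le_csSup (Xnorm_bddAbove Fam x) ⟨f, hf, rfl⟩

end Wclose

section Wsigns
variable {Fam : Set (Finset ℕ)}

lemma IsAvg_neg_Wset {a : c00} {ℓ : ℕ} (h : IsAvg (Wset Fam) a ℓ) :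
    IsAvg (Wset Fam) (-a) ℓ := by
  obtain ⟨hmem, hℓ2, d', g, hd', hd'ℓ, hgW, hglt, heq⟩ := h
  refine ⟨Wset_neg_mem hmem, hℓ2, d', fun t => -(g t), hd', hd'ℓ,
    fun t ht => Wset_neg_mem (hgW t ht), ?_, ?_⟩
  · intro t ht i hi j hj
    rw [Finsupp.support_neg] at hi hj
    exact hglt t ht i hi j hj
  · rw [heq, ← smul_neg, neg_sum_c00]

lemma IsAvg_pm_smul {c : ℝ} (hc : c = 1 ∨ c = -1) {a : c00} {ℓ : ℕ}
    (h : IsAvg (Wset Fam) a ℓ) : IsAvg (Wset Fam) (c • a) ℓ := by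
  rcases hc with rfl | rfl
  · rwa [one_smul]
  · rw [neg_one_smul]
    exact IsAvg_neg_Wset h

lemma minSupp_smul {c : ℝ} (hc : c ≠ 0) (f : c00) : minSupp (c • f) = minSupp f := by
  unfold minSupp
  congr 1
  ext i
  simp [Finsupp.smul_apply, hc]

lemma maxSupp_smul {c : ℝ} (hc : c ≠ 0) (f : c00) : maxSupp (c • f) = maxSupp f := by
  unfold maxSupp
  rw [Finsupp.support_smul_eq hc]

lemma support_smul_pm {c : ℝ} (hc : c ≠ 0) (f : c00) : (c • f).support = f.support :=
  Finsupp.support_smul_eq hc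

end Wsigns

/-- **Statement 17.** If `(x_i)` is a normalized block sequence in `𝔛_{0,1}^{ω^ξ}` with
`α_{<ω^ξ}((x_i)) > 0`, then some subsequence `(x_{M i})` is an `ℓ₁^{ω^ξ}` spreading model:
there is `ε > 0` with `‖Σ_{i∈G} λ_i x_{M i}‖ ≥ ε Σ_{i∈G} |λ_i|` for all `G ∈ 𝓢_{ω^ξ}`. -/
theorem statement17 (SS : SchreierSystem) (ξ : Ordinal) (h1 : 1 ≤ ξ) (hξ : ξ < omega1)
    (x : ℕ → c00) (hx : IsNormBlock (SS.S (Ordinal.omega0 ^ ξ)) x)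
    (h : ¬ AlphaZero SS ξ x) :
    ∃ M : ℕ → ℕ, StrictMono M ∧ ∃ ε : ℝ, 0 < ε ∧
      ∀ G : Finset ℕ, G ∈ SS.S (Ordinal.omega0 ^ ξ) → ∀ lam : ℕ → ℝ,
        ε * ∑ i ∈ G, |lam i| ≤
          Xnorm (SS.S (Ordinal.omega0 ^ ξ)) (∑ i ∈ G, lam i • x (M i)) := by
  classical
  set ζ : Ordinal := Ordinal.omega0 ^ ξ with hζdef
  set Fam : Set (Finset ℕ) := SS.S ζ with hFamdef
  have hζω1 : ζ < omega1 := opow_lt_omega1 ξ hξ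
  have hξ0 : ξ ≠ 0 := by
    intro h0
    rw [h0] at h1
    exact absurd h1 (by simp)
  have hζlim : Order.IsSuccLimit ζ := Ordinal.isSuccLimit_opow_left Ordinal.isSuccLimit_omega0 hξ0
  -- data from ¬ AlphaZero
  unfold AlphaZero at h
  push_neg at h
  obtain ⟨n, α, sz, hAvg, hslt, hsz, hms, F, hFsuc, hFadm, m, hm, hnt⟩ := h
  obtain ⟨⟨hxnz, hxlt⟩, hxnorm⟩ := hx
  -- positivity of sums
  have hsumnn : ∀ k : ℕ, 0 ≤ ∑ q ∈ F k, |dotc (α q) (x (m k))| :=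
    fun k => Finset.sum_nonneg (fun q _ => abs_nonneg _)
  -- frequent big sums
  obtain ⟨ε, hε, hfreq⟩ : ∃ ε : ℝ, 0 < ε ∧ ∀ N : ℕ, ∃ k, N ≤ k ∧
      ε ≤ ∑ q ∈ F k, |dotc (α q) (x (m k))| := by
    by_contra hcon
    push_neg at hcon
    apply hnt
    rw [Metric.tendsto_atTop]
    intro ε' hε'
    obtain ⟨N, hN⟩ := hcon ε' hε'
    refine ⟨N, fun k hk => ?_⟩
    rw [Real.dist_eq, sub_zero, abs_of_nonneg (hsumnn k)]
    exact hN k hk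
  -- basic facts about α
  have hαW : ∀ q, α q ∈ Wset Fam := fun q => (hAvg q).1
  have hαnz : ∀ q, α q ≠ 0 := fun q => Wset_ne_zero (hαW q)
  have hαminmono : StrictMono (fun q => minSupp (α q)) :=
    strictMono_nat_of_lt_succ (fun q =>
      lt_of_le_of_lt (minSupp_le_maxSupp (hαnz q))
        ((suppLt_iff (hαnz q) (hαnz (q+1))).1 (hslt q)))
  have hαminge : ∀ q : ℕ, q ≤ minSupp (α q) := fun q => hαminmono.le_apply
  have hαchain : ∀ q q' : ℕ, q < q' → suppLt (α q) (α q') := by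
    intro q q' hqq'
    exact suppLt_chain (d := q' + 1) (fun t _ => hαnz t)
      (fun t _ => hslt t) q q' hqq' (Nat.lt_succ_self q')
  have hszmono : StrictMono sz := strictMono_nat_of_lt_succ hsz
  -- block facts about x
  have hxminmono : StrictMono (fun j => minSupp (x j)) :=
    strictMono_nat_of_lt_succ (fun j =>
      lt_of_le_of_lt (minSupp_le_maxSupp (hxnz j))
        ((suppLt_iff (hxnz j) (hxnz (j+1))).1 (hxlt j (j+1) (Nat.lt_succ_self j))))
  -- combinatorial data
  have hηlt : SS.seq ζ n < ζ := SS.seq_lt ζ hζω1 hζlim n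
  have hηω1 : SS.seq ζ n < omega1 := lt_trans hηlt hζω1
  obtain ⟨φ, hφid, hφ⟩ := lemmaC SS (SS.seq ζ n) hηω1 ζ hζω1
  have habs : SS.seq ζ n + ζ = ζ := Ordinal.add_omega0_opow hηlt
  -- the Φ growth function
  set Φ : ℕ → ℕ := fun j => max j (φ j) with hΦdef
  -- existence of good indices above any bound
  have hEX : ∀ B : ℕ, ∃ k : ℕ, (ε ≤ ∑ q ∈ F k, |dotc (α q) (x (m k))|) ∧
      (∀ q ∈ F k, B < minSupp (α q)) ∧ B < minSupp (x (m k)) := by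
    intro B
    -- a strictly increasing sequence of good k's
    have hc : ∀ N : ℕ, ∃ k, N ≤ k ∧ ε ≤ ∑ q ∈ F k, |dotc (α q) (x (m k))| := hfreq
    set c : ℕ → ℕ := fun j => Nat.rec (hc 0).choose
      (fun _ cj => (hc (cj + 1)).choose) j with hcdef
    have hc0 : ε ≤ ∑ q ∈ F (c 0), |dotc (α q) (x (m (c 0)))| := (hc 0).choose_spec.2
    have hcsucc : ∀ j : ℕ, c j + 1 ≤ c (j+1) ∧
        ε ≤ ∑ q ∈ F (c (j+1)), |dotc (α q) (x (m (c (j+1))))| := by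
      intro j
      exact (hc (c j + 1)).choose_spec
    have hcmono : StrictMono c := strictMono_nat_of_lt_succ (fun j => (hcsucc j).1)
    have hcgood : ∀ j : ℕ, ε ≤ ∑ q ∈ F (c j), |dotc (α q) (x (m (c j)))| := by
      intro j
      cases j with
      | zero => exact hc0
      | succ j => exact (hcsucc j).2
    have hFne : ∀ j : ℕ, (F (c j)).Nonempty := by
      intro j
      rcases Finset.eq_empty_or_nonempty (F (c j)) with he | hne
      · exfalso
        have := hcgood j
        rw [he, Finset.sum_empty] at this
        exact absurd this (not_le_of_gt hε)
      · exact hne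
    -- mins of the F's
    set a : ℕ → ℕ := fun j => sInf ((F (c j) : Set ℕ)) with hadef
    have hamem : ∀ j, a j ∈ F (c j) := fun j => sInf_finset_mem (hFne j)
    have hamono : StrictMono a := strictMono_nat_of_lt_succ (fun j =>
      hFsuc (c j) (c (j+1)) (hcmono (Nat.lt_succ_self j)) _ (hamem j) _ (hamem (j+1)))
    refine ⟨c (B+1), hcgood (B+1), ?_, ?_⟩
    · intro q hq
      have hq1 : a B < q := hFsuc (c B) (c (B+1)) (hcmono (Nat.lt_succ_self B)) _ (hamem B) q hq
      have hBa : B ≤ a B := hamono.le_apply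
      exact lt_of_lt_of_le (lt_of_le_of_lt hBa hq1) (hαminge q)
    · have h1' : B + 1 ≤ c (B+1) := hcmono.le_apply
      have h2' : c (B+1) ≤ m (c (B+1)) := hm.le_apply
      have h3' : m (c (B+1)) ≤ minSupp (x (m (c (B+1)))) := hxminmono.le_apply
      omega
  -- big bound function
  set BIG : ℕ → ℕ := fun K => max (maxSupp (x (m K))) ((F K).sup fun q => maxSupp (α q))
    with hBIGdef
  -- the extracted sequence
  set k : ℕ → ℕ := fun j => Nat.rec (hEX (Φ 0)).choose
    (fun j kj => (hEX (max (Φ (j+1)) (BIG kj))).choose) j with hkdef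
  have hk0 : (ε ≤ ∑ q ∈ F (k 0), |dotc (α q) (x (m (k 0)))|) ∧
      (∀ q ∈ F (k 0), Φ 0 < minSupp (α q)) ∧ Φ 0 < minSupp (x (m (k 0))) :=
    (hEX (Φ 0)).choose_spec
  have hksucc : ∀ j : ℕ, (ε ≤ ∑ q ∈ F (k (j+1)), |dotc (α q) (x (m (k (j+1))))|) ∧
      (∀ q ∈ F (k (j+1)), max (Φ (j+1)) (BIG (k j)) < minSupp (α q)) ∧
      max (Φ (j+1)) (BIG (k j)) < minSupp (x (m (k (j+1)))) := by
    intro j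
    exact (hEX (max (Φ (j+1)) (BIG (k j)))).choose_spec
  -- invariants
  have I1 : ∀ j : ℕ, ε ≤ ∑ q ∈ F (k j), |dotc (α q) (x (m (k j)))| := by
    intro j
    cases j with
    | zero => exact hk0.1
    | succ j => exact (hksucc j).1
  have I2 : ∀ j : ℕ, ∀ q ∈ F (k j), Φ j < minSupp (α q) := by
    intro j
    cases j with
    | zero => exact hk0.2.1
    | succ j => exact fun q hq => lt_of_le_of_lt (le_max_left _ _) ((hksucc j).2.1 q hq)
  have I3 : ∀ j : ℕ, ∀ q ∈ F (k (j+1)), BIG (k j) < minSupp (α q) :=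
    fun j q hq => lt_of_le_of_lt (le_max_right _ _) ((hksucc j).2.1 q hq)
  have I4 : ∀ j : ℕ, BIG (k j) < minSupp (x (m (k (j+1)))) :=
    fun j => lt_of_le_of_lt (le_max_right _ _) ((hksucc j).2.2)
  have hFkne : ∀ j : ℕ, (F (k j)).Nonempty := by
    intro j
    rcases Finset.eq_empty_or_nonempty (F (k j)) with he | hne
    · exfalso
      have := I1 j
      rw [he, Finset.sum_empty] at this
      exact absurd this (not_le_of_gt hε)
    · exact hne
  set M : ℕ → ℕ := fun i => m (k i) with hMdef
  have hMmono : StrictMono M := by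
    apply strictMono_nat_of_lt_succ
    intro j
    by_contra hcon
    push_neg at hcon
    have hBIGge : maxSupp (x (M j)) ≤ BIG (k j) := le_max_left _ _
    have h4 : maxSupp (x (M j)) < minSupp (x (M (j+1))) := lt_of_le_of_lt hBIGge (I4 j)
    rcases lt_or_eq_of_le hcon with hlt | heq
    · have h2 := (suppLt_iff (hxnz _) (hxnz _)).1 (hxlt _ _ hlt)
      have h3 := minSupp_le_maxSupp (hxnz (M j))
      have h5 := minSupp_le_maxSupp (hxnz (M (j+1)))
      omega
    · rw [heq] at h4
      exact absurd (minSupp_le_maxSupp (hxnz (M j))) (not_le_of_gt h4)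
  have hkmono : StrictMono k := by
    intro a b hab
    exact hm.lt_iff_lt.1 (hMmono hab)
  have hymaxmono : ∀ i j : ℕ, i ≤ j → maxSupp (x (M i)) ≤ maxSupp (x (M j)) := by
    intro i j hij
    rcases lt_or_eq_of_le hij with hlt | rfl
    · refine le_of_lt (lt_of_lt_of_le ?_ (minSupp_le_maxSupp (hxnz _)))
      exact (suppLt_iff (hxnz _) (hxnz _)).1 (hxlt _ _ (hMmono hlt))
    · exact le_refl _
  have hyminmono : ∀ i j : ℕ, i ≤ j → minSupp (x (M i)) ≤ minSupp (x (M j)) := by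
    intro i j hij
    rcases lt_or_eq_of_le hij with hlt | rfl
    · refine le_of_lt (lt_of_le_of_lt (minSupp_le_maxSupp (hxnz _)) ?_)
      exact (suppLt_iff (hxnz _) (hxnz _)).1 (hxlt _ _ (hMmono hlt))
    · exact le_refl _
  have V1 : ∀ i j : ℕ, i < j → ∀ q ∈ F (k j), dotc (α q) (x (M i)) = 0 := by
    intro i j hij q hq
    obtain ⟨j', rfl⟩ : ∃ j', j = j' + 1 := ⟨j - 1, by omega⟩
    apply dotc_eq_zero_left_of_lt
    calc maxSupp (x (M i)) ≤ maxSupp (x (M j')) := hymaxmono i j' (by omega)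
      _ ≤ BIG (k j') := le_max_left _ _
      _ < minSupp (α q) := I3 j' q hq
  have V2 : ∀ i j : ℕ, i < j → ∀ q ∈ F (k i), dotc (α q) (x (M j)) = 0 := by
    intro i j hij q hq
    apply dotc_eq_zero_right_of_lt
    calc maxSupp (α q) ≤ (F (k i)).sup (fun q => maxSupp (α q)) := Finset.le_sup (f := fun q => maxSupp (α q)) hq
      _ ≤ BIG (k i) := le_max_right _ _
      _ < minSupp (x (M (i+1))) := I4 i
      _ ≤ minSupp (x (M j)) := hyminmono (i+1) j (by omega)
  refine ⟨M, hMmono, ε, hε, ?_⟩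
  intro G hG lam
  rcases G.eq_empty_or_nonempty with rfl | hGne
  · simp only [Finset.sum_empty, mul_zero]
    have hmem : (Finsupp.single 0 1 : c00) ∈ Wset Fam :=
      Wlevel_subset_Wset 0 ⟨0, Or.inl rfl⟩
    have h0 : dotc (Finsupp.single 0 1) (0 : c00) = 0 :=
      dotc_eq_zero_of_apart (fun i _ => rfl)
    have := dotc_le_Xnorm (x := 0) hmem
    rw [h0] at this
    exact this
  -- sign helper
  have hsgn : ∀ a : ℝ, (if a < 0 then (-1:ℝ) else 1) * a = |a| := by
    intro a
    by_cases ha : a < 0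
    · rw [if_pos ha, abs_of_neg ha]; ring
    · rw [if_neg ha, abs_of_nonneg (le_of_not_gt ha), one_mul]
  -- owner function
  set own : ℕ → ℕ := fun q => sInf {i : ℕ | i ∈ G ∧ q ∈ F (k i)} with howndef
  have hown : ∀ i ∈ G, ∀ q ∈ F (k i), own q = i := by
    intro i hi q hq
    have hmem : i ∈ {i' : ℕ | i' ∈ G ∧ q ∈ F (k i')} := ⟨hi, hq⟩
    have hinf := Nat.sInf_mem (Set.nonempty_of_mem hmem)
    obtain ⟨hiG, hiF⟩ := hinf
    have hle : own q ≤ i := Nat.sInf_le hmem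
    rcases lt_or_eq_of_le hle with hlt | heq
    · exact absurd (hFsuc (k (own q)) (k i) (hkmono hlt) q hiF q hq) (lt_irrefl q)
    · exact heq
  -- signs
  set csg : ℕ → ℝ := fun q => (if lam (own q) < 0 then (-1:ℝ) else 1) *
    (if dotc (α q) (x (M (own q))) < 0 then (-1:ℝ) else 1) with hcsgdef
  have hcsg_pm : ∀ q, csg q = 1 ∨ csg q = -1 := by
    intro q
    simp only [hcsgdef]
    split <;> split <;> norm_num
  have hcsg_ne : ∀ q, csg q ≠ 0 := by
    intro q
    rcases hcsg_pm q with hc | hc <;> rw [hc] <;> norm_num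
  -- the index set
  set Q : Finset ℕ := G.biUnion (fun i => F (k i)) with hQdef
  have hPD : (↑G : Set ℕ).PairwiseDisjoint (fun i => F (k i)) := by
    intro i hi j hj hij
    simp only [Function.onFun]
    rw [Finset.disjoint_left]
    intro q hq1 hq2
    rcases hij.lt_or_gt with hlt | hlt
    · exact absurd (hFsuc (k i) (k j) (hkmono hlt) q hq1 q hq2) (lt_irrefl q)
    · exact absurd (hFsuc (k j) (k i) (hkmono hlt) q hq2 q hq1) (lt_irrefl q)
  have hQne : Q.Nonempty := by
    obtain ⟨i0, hi0⟩ := hGne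
    obtain ⟨q0, hq0⟩ := hFkne i0
    exact ⟨q0, Finset.mem_biUnion.2 ⟨i0, hi0, hq0⟩⟩
  set d : ℕ := Q.card with hddef
  have hd1 : 1 ≤ d := Finset.card_pos.2 hQne
  set e : Fin d ≃o {z // z ∈ Q} := Q.orderIsoOfFin hddef.symm with hedef
  have hemem : ∀ (t : ℕ) (ht : t < d), ((e ⟨t, ht⟩ : {z // z ∈ Q}) : ℕ) ∈ Q :=
    fun t ht => (e ⟨t, ht⟩).2
  have hemono : ∀ (t t' : ℕ) (ht : t < d) (ht' : t' < d), t < t' →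
      ((e ⟨t, ht⟩ : {z // z ∈ Q}) : ℕ) < ((e ⟨t', ht'⟩ : {z // z ∈ Q}) : ℕ) := by
    intro t t' ht ht' htt'
    have h1 : (⟨t, ht⟩ : Fin d) < ⟨t', ht'⟩ := htt'
    have h2 : e ⟨t, ht⟩ < e ⟨t', ht'⟩ := e.lt_iff_lt.2 h1
    exact_mod_cast h2
  -- the functions A and SZ
  set A : ℕ → c00 := fun t => if ht : t < d then
    csg ((e ⟨t, ht⟩ : {z // z ∈ Q}) : ℕ) • α ((e ⟨t, ht⟩ : {z // z ∈ Q}) : ℕ) else 0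
    with hAdef
  set SZ : ℕ → ℕ := fun t => if ht : t < d then sz ((e ⟨t, ht⟩ : {z // z ∈ Q}) : ℕ) else 0
    with hSZdef
  have hAval : ∀ (t : ℕ) (ht : t < d), A t =
      csg ((e ⟨t, ht⟩ : {z // z ∈ Q}) : ℕ) • α ((e ⟨t, ht⟩ : {z // z ∈ Q}) : ℕ) := by
    intro t ht
    simp only [hAdef]
    rw [dif_pos ht]
  have hSZval : ∀ (t : ℕ) (ht : t < d), SZ t = sz ((e ⟨t, ht⟩ : {z // z ∈ Q}) : ℕ) := by
    intro t ht
    simp only [hSZdef]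
    rw [dif_pos ht]
  -- admissibility of A
  have havgA : ∀ t < d, IsAvg (Wset Fam) (A t) (SZ t) := by
    intro t ht
    rw [hAval t ht, hSZval t ht]
    exact IsAvg_pm_smul (hcsg_pm _) (hAvg _)
  have hsltA : ∀ t : ℕ, t + 1 < d → suppLt (A t) (A (t + 1)) := by
    intro t ht
    have ht0 : t < d := by omega
    rw [hAval t ht0, hAval (t+1) ht]
    intro i hi j hj
    rw [support_smul_pm (hcsg_ne _)] at hi hj
    exact hαchain _ _ (hemono t (t+1) ht0 ht (Nat.lt_succ_self t)) i hi j hj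
  have hszA : ∀ t : ℕ, t + 1 < d → SZ t < SZ (t + 1) := by
    intro t ht
    have ht0 : t < d := by omega
    rw [hSZval t ht0, hSZval (t+1) ht]
    exact hszmono (hemono t (t+1) ht0 ht (Nat.lt_succ_self t))
  have hmsA : ∀ t : ℕ, t + 1 < d → maxSupp (A t) < SZ (t + 1) := by
    intro t ht
    have ht0 : t < d := by omega
    rw [hAval t ht0, hSZval (t+1) ht, maxSupp_smul (hcsg_ne _)]
    calc maxSupp (α ((e ⟨t, ht0⟩ : {z // z ∈ Q}) : ℕ))
        < sz (((e ⟨t, ht0⟩ : {z // z ∈ Q}) : ℕ) + 1) := hms _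
      _ ≤ sz ((e ⟨t+1, ht⟩ : {z // z ∈ Q}) : ℕ) := hszmono.monotone
          (Nat.succ_le_of_lt (hemono t (t+1) ht0 ht (Nat.lt_succ_self t)))
  -- the admissibility image
  have himA : ((Finset.range d).image fun t => minSupp (A t)) ∈ Fam := by
    have him1 : ((Finset.range d).image fun t => minSupp (A t)) =
        Q.image (fun q => minSupp (α q)) := by
      ext b
      simp only [Finset.mem_image, Finset.mem_range]
      constructor
      · rintro ⟨t, ht, rfl⟩
        refine ⟨((e ⟨t, ht⟩ : {z // z ∈ Q}) : ℕ), hemem t ht, ?_⟩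
        rw [hAval t ht, minSupp_smul (hcsg_ne _)]
      · rintro ⟨q, hq, rfl⟩
        refine ⟨(e.symm ⟨q, hq⟩ : Fin d).1, (e.symm ⟨q, hq⟩).2, ?_⟩
        have h2 : (⟨(e.symm ⟨q, hq⟩ : Fin d).1, (e.symm ⟨q, hq⟩).2⟩ : Fin d) =
            e.symm ⟨q, hq⟩ := rfl
        rw [hAval _ (e.symm ⟨q, hq⟩).2, minSupp_smul (hcsg_ne _), h2,
          e.apply_symm_apply]
    rw [him1, hQdef, Finset.biUnion_image]
    have hres := hφ G hG (fun i => (F (k i)).image (fun q => minSupp (α q)))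
      (fun i _ => hFadm (k i))
      (fun i _ => (hFkne i).image _)
      ?_ ?_
    · rw [habs] at hres
      exact hres
    · intro i hi j hj hij a ha b hb
      obtain ⟨qa, hqa, rfl⟩ := Finset.mem_image.1 ha
      obtain ⟨qb, hqb, rfl⟩ := Finset.mem_image.1 hb
      exact hαminmono (hFsuc (k i) (k j) (hkmono hij) qa hqa qb hqb)
    · intro i hi a ha
      obtain ⟨qa, hqa, rfl⟩ := Finset.mem_image.1 ha
      have := I2 i qa hqa
      have hΦφ : φ i ≤ Φ i := le_max_right _ _
      omega
  -- the norming functional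
  set g : c00 := ∑ t ∈ Finset.range d, A t with hgdef
  have hgmem : g ∈ Wset Fam := Wset_vfg_sum hd1 ⟨havgA, hsltA, hszA, hmsA, himA⟩
  have hgsum : g = ∑ q ∈ Q, csg q • α q := by
    rw [hgdef, Finset.sum_range (fun t => A t)]
    calc ∑ t : Fin d, A t.1
        = ∑ t : Fin d, csg ((e t : {z // z ∈ Q}) : ℕ) • α ((e t : {z // z ∈ Q}) : ℕ) := by
          refine Finset.sum_congr rfl (fun t _ => ?_)
          rw [hAval t.1 t.isLt]
      _ = ∑ z : {z // z ∈ Q}, csg (z : ℕ) • α (z : ℕ) :=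
          Equiv.sum_comp e.toEquiv (fun z : {z // z ∈ Q} => csg (z : ℕ) • α (z : ℕ))
      _ = ∑ q ∈ Q, csg q • α q := Finset.sum_coe_sort Q (fun q => csg q • α q)
  set v : c00 := ∑ i ∈ G, lam i • x (M i) with hvdef
  have hinner : ∀ i ∈ G, ∀ q ∈ F (k i),
      csg q * dotc (α q) v = |lam i| * |dotc (α q) (x (M i))| := by
    intro i hi q hq
    have hownq : own q = i := hown i hi q hq
    have hv : dotc (α q) v = lam i * dotc (α q) (x (M i)) := by
      rw [hvdef, dotc_sum_right]
      rw [Finset.sum_eq_single_of_mem i hi]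
      · exact dotc_smul_right _ _ _
      · intro i' hi' hne
        rw [dotc_smul_right]
        rcases hne.lt_or_gt with hlt | hlt
        · rw [V1 i' i hlt q hq, mul_zero]
        · rw [V2 i i' hlt q hq, mul_zero]
    have hstep : csg q * (lam i * dotc (α q) (x (M i))) =
        ((if lam i < 0 then (-1:ℝ) else 1) * lam i) *
        ((if dotc (α q) (x (M i)) < 0 then (-1:ℝ) else 1) * dotc (α q) (x (M i))) := by
      simp only [hcsgdef, hownq]
      ring
    rw [hv, hstep, hsgn, hsgn]
  calc ε * ∑ i ∈ G, |lam i| = ∑ i ∈ G, ε * |lam i| := Finset.mul_sum _ _ _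
    _ ≤ ∑ i ∈ G, |lam i| * ∑ q ∈ F (k i), |dotc (α q) (x (M i))| := by
        refine Finset.sum_le_sum (fun i _ => ?_)
        rw [mul_comm]
        exact mul_le_mul_of_nonneg_left (I1 i) (abs_nonneg _)
    _ = ∑ i ∈ G, ∑ q ∈ F (k i), |lam i| * |dotc (α q) (x (M i))| := by
        refine Finset.sum_congr rfl (fun i _ => ?_)
        rw [Finset.mul_sum]
    _ = ∑ i ∈ G, ∑ q ∈ F (k i), csg q * dotc (α q) v := by
        refine Finset.sum_congr rfl (fun i hi => ?_)
        refine Finset.sum_congr rfl (fun q hq => ?_)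
        exact (hinner i hi q hq).symm
    _ = ∑ q ∈ Q, csg q * dotc (α q) v := (Finset.sum_biUnion hPD).symm
    _ = dotc g v := by
        rw [hgsum, dotc_sum_left]
        refine Finset.sum_congr rfl (fun q _ => ?_)
        rw [dotc_smul_left]
    _ ≤ Xnorm Fam v := dotc_le_Xnorm hgmem
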